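/- Let G be a finite group and X a nonempty conjugation-invariant subset of O such that the commuting graph Γ_X is connected. Then there exists a set ρ of odd prime divisors of |G|, containing the order of every element of X, such that E_ρ(G) is exactly the connected component of Γ_O containing X. In particular, every big connected component of Γ_O is of the form E_ρ(G) for some set ρ of odd primes. -/

import Mathlib

open SimpleGraph Pointwise

/-- The commuting graph on a subset `X` of a group `G`: vertices are the elements of `X`,
and two distinct vertices are adjacent iff they commute. -/
def commGraph {G : Type*} [Group G] (X : Set G) : SimpleGraph X where
  Adj a b := a ≠ b ∧ (a : G) * (b : G) = (b : G) * (a : G)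
  symm := ⟨fun a b h => ⟨h.1.symm, h.2.symm⟩⟩
  loopless := ⟨fun a h => h.1 rfl⟩

/-- The connected component of `x` in the commuting graph on `X`, viewed as a subset of `G`. -/
def compSet {G : Type*} [Group G] (X : Set G) (x : G) (hx : x ∈ X) : Set G :=
  {y : G | ∃ hy : y ∈ X, (commGraph X).Reachable ⟨x, hx⟩ ⟨y, hy⟩}

/-- The stabilizer `H_x` in `G` of the connected component of `x` in the commuting graph on `X`,
under the conjugation action. -/
def conjStab {G : Type*} [Group G] (X : Set G) (x : G) (hx : x ∈ X) : Set G :=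
  {g : G | (fun y => g⁻¹ * y * g) '' compSet X x hx = compSet X x hx}

/-- The set `O` of elements of odd prime order in `G`. -/
def oddPrimeOrderElts (G : Type*) [Group G] : Set G :=
  {x : G | (orderOf x).Prime ∧ Odd (orderOf x)}


/-- The inclusion homomorphism between commuting graphs. -/
def commGraphIncl {G : Type*} [Group G] {X Y : Set G} (h : X ⊆ Y) :
    commGraph X →g commGraph Y where
  toFun v := ⟨v.1, h v.2⟩
  map_rel' {u v} hab :=
    ⟨fun hh => hab.1 (Subtype.ext (Subtype.mk_eq_mk.mp hh)), hab.2⟩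

/-- Reachability is monotone in the vertex set. -/
lemma reach_mono {G : Type*} [Group G] {X Y : Set G} (h : X ⊆ Y) {a b : X}
    (hr : (commGraph X).Reachable a b) :
    (commGraph Y).Reachable ⟨a, h a.2⟩ ⟨b, h b.2⟩ :=
  hr.map (commGraphIncl h)

/-- The conjugation homomorphism on the commuting graph of a conj-invariant set. -/
def commGraphConj {G : Type*} [Group G] {S : Set G}
    (hS : ∀ x ∈ S, ∀ g : G, g⁻¹ * x * g ∈ S) (g : G) :
    commGraph S →g commGraph S where
  toFun v := ⟨g⁻¹ * v.1 * g, hS v.1 v.2 g⟩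
  map_rel' {u v} hab := by
    refine ⟨fun hh => hab.1 ?_, ?_⟩
    · have h1 : g⁻¹ * (u : G) * g = g⁻¹ * (v : G) * g := Subtype.mk_eq_mk.mp hh
      exact Subtype.ext (by simpa [mul_assoc] using mul_left_cancel (mul_right_cancel h1))
    · have hc := hab.2
      show g⁻¹ * (u : G) * g * (g⁻¹ * (v : G) * g) = g⁻¹ * (v : G) * g * (g⁻¹ * (u : G) * g)
      simp only [mul_assoc, mul_inv_cancel_left]
      rw [← mul_assoc (u : G), ← mul_assoc (v : G), hc]

/-- Conjugation preserves reachability. -/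
lemma reach_conj {G : Type*} [Group G] {S : Set G}
    (hS : ∀ x ∈ S, ∀ g : G, g⁻¹ * x * g ∈ S) (g : G) {a b : S}
    (hr : (commGraph S).Reachable a b) :
    (commGraph S).Reachable ⟨g⁻¹ * a * g, hS a a.2 g⟩ ⟨g⁻¹ * b * g, hS b b.2 g⟩ :=
  hr.map (commGraphConj hS g)

/-- Two commuting elements of`S` are reachable in the commuting graph. -/
lemma reach_of_commute {G : Type*} [Group G] {S : Set G} {a b : G}
    (ha : a ∈ S) (hb : b ∈ S) (hc : a * b = b * a) :
    (commGraph S).Reachable ⟨a, ha⟩ ⟨b, hb⟩ := by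
  by_cases hab : a = b
  · subst hab; rfl
  · exact SimpleGraph.Adj.reachable ⟨fun hh => hab (Subtype.mk_eq_mk.mp hh), hc⟩

/-- Two elements of prime order `p` can be connected after conjugation via a central element
of a Sylow subgroup. -/
lemma exists_conj_commute {G : Type*} [Group G] [Finite G] {p : ℕ} (hp : p.Prime)
    {y z : G} (hy : orderOf y = p) (hz : orderOf z = p) :
    ∃ (g w : G), orderOf w = p ∧ (g⁻¹ * z * g) * w = w * (g⁻¹ * z * g) ∧ w * y = y * w := by
  haveI : Fact p.Prime := ⟨hp⟩
  have hyP : IsPGroup p (Subgroup.zpowers y) :=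
    IsPGroup.of_card (by rw [Nat.card_zpowers, hy, pow_one])
  obtain ⟨P, hP⟩ := hyP.exists_le_sylow
  have hzQ : IsPGroup p (Subgroup.zpowers z) :=
    IsPGroup.of_card (by rw [Nat.card_zpowers, hz, pow_one])
  obtain ⟨Q, hQ⟩ := hzQ.exists_le_sylow
  obtain ⟨g, hg⟩ := MulAction.exists_smul_eq G Q P
  have hyP' : y ∈ (P : Subgroup G) := hP (Subgroup.mem_zpowers y)
  have hzQ' : z ∈ (Q : Subgroup G) := hQ (Subgroup.mem_zpowers z)
  have hz' : g * z * g⁻¹ ∈ (P : Subgroup G) := by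
    have h2 : MulAut.conj g z ∈ MulAut.conj g • (Q : Subgroup G) :=
      Subgroup.smul_mem_pointwise_smul _ _ _ hzQ'
    have h3 : g * z * g⁻¹ ∈ MulAut.conj g • (Q : Subgroup G) := by
      rwa [MulAut.conj_apply] at h2
    rw [← hg]
    exact h3
  -- find an element of order p in the center of P
  haveI : Nontrivial (P : Subgroup G) := by
    refine ⟨⟨y, hyP'⟩, 1, fun hh => ?_⟩
    have : y = 1 := Subtype.mk_eq_mk.mp hh
    rw [this, orderOf_one] at hy
    exact hp.one_lt.ne hy
  haveI := P.isPGroup'.center_nontrivial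
  have hcent : IsPGroup p (Subgroup.center (P : Subgroup G)) :=
    P.isPGroup'.to_subgroup _
  obtain ⟨n, hn, hcard⟩ := (IsPGroup.nontrivial_iff_card hcent).mp inferInstance
  have hdvd : p ∣ Nat.card (Subgroup.center (P : Subgroup G)) := by
    rw [hcard]; exact dvd_pow_self p hn.ne'
  obtain ⟨c, hc⟩ := exists_prime_orderOf_dvd_card' p hdvd
  refine ⟨g⁻¹, ((c : (P : Subgroup G)) : G), ?_, ?_, ?_⟩
  · exact (orderOf_injective (P : Subgroup G).subtype Subtype.coe_injective _).trans
      ((orderOf_injective (Subgroup.center (P : Subgroup G)).subtype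
        Subtype.coe_injective _).trans hc)
  · have h1 : (⟨g * z * g⁻¹, hz'⟩ : (P : Subgroup G)) * c = c * ⟨g * z * g⁻¹, hz'⟩ :=
      Subgroup.mem_center_iff.mp c.2 _
    have := congrArg (fun u : (P : Subgroup G) => (u : G)) h1
    simpa [mul_assoc] using this
  · have h1 : (c : (P : Subgroup G)) * ⟨y, hyP'⟩ = ⟨y, hyP'⟩ * c :=
      (Subgroup.mem_center_iff.mp c.2 _).symm
    simpa using congrArg (fun u : (P : Subgroup G) => (u : G)) h1

/-- Let `G` be a finite group and `X` a nonempty conjugation-invariant subset of the set `O`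
of elements of odd prime order, such that the commuting graph on `X` is connected. Then there
is a set `ρ` of odd prime divisors of `|G|` containing the order of every element of `X`,
such that `E_ρ(G) = {y | orderOf y ∈ ρ}` is exactly the connected component of the commuting
graph `Γ_O` containing `X`. -/
theorem bigComponent_eq_primeOrderElts
    {G : Type*} [Group G] [Finite G] (X : Set G)
    (hne : X.Nonempty)
    (hXO : X ⊆ oddPrimeOrderElts G)
    (hconj : ∀ x ∈ X, ∀ g : G, g⁻¹ * x * g ∈ X)
    (hconn : (commGraph X).Connected) :
    ∃ ρ : Set ℕ,
      (∀ p ∈ ρ, p.Prime ∧ Odd p ∧ p ∣ Nat.card G) ∧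
      (∀ x ∈ X, orderOf x ∈ ρ) ∧
      ∀ x, ∀ hx : x ∈ X,
        compSet (oddPrimeOrderElts G) x (hXO hx) = {y : G | orderOf y ∈ ρ} := by
  obtain ⟨x₀, hx₀⟩ := hne
  set O := oddPrimeOrderElts G with hO
  have horder : ∀ (g x : G), orderOf (g⁻¹ * x * g) = orderOf x := by
    intro g x
    have := (MulAut.conj g⁻¹).orderOf_eq x
    simpa [MulAut.conj_apply] using this
  have hOconj : ∀ x ∈ O, ∀ g : G, g⁻¹ * x * g ∈ O := by
    intro x hx g
    exact ⟨by rw [horder]; exact hx.1, by rw [horder]; exact hx.2⟩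
  set C := compSet O x₀ (hXO hx₀) with hC
  have hmemC : ∀ y : G, y ∈ C ↔ ∃ hy : y ∈ O, (commGraph O).Reachable ⟨x₀, hXO hx₀⟩ ⟨y, hy⟩ :=
    fun y => Iff.rfl
  have hXreach : ∀ x (hx : x ∈ X), (commGraph O).Reachable ⟨x₀, hXO hx₀⟩ ⟨x, hXO hx⟩ := by
    intro x hx
    exact reach_mono hXO (hconn.preconnected ⟨x₀, hx₀⟩ ⟨x, hx⟩)
  have hXC : ∀ x ∈ X, x ∈ C := fun x hx => ⟨hXO hx, hXreach x hx⟩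
  -- C is conjugation-invariant
  have hCconj : ∀ z ∈ C, ∀ g : G, g⁻¹ * z * g ∈ C := by
    intro z hz g
    obtain ⟨hzO, hr⟩ := hz
    have h1 := reach_conj hOconj g hr
    have h2 : (commGraph O).Reachable ⟨x₀, hXO hx₀⟩ ⟨g⁻¹ * x₀ * g, hOconj x₀ (hXO hx₀) g⟩ :=
      hXreach _ (hconj x₀ hx₀ g)
    exact ⟨hOconj z hzO g, h2.trans h1⟩
  refine ⟨{p | ∃ y, ∃ _ : y ∈ C, orderOf y = p}, ?_, ?_, ?_⟩
  · rintro p ⟨y, hyC, rfl⟩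
    obtain ⟨hyO, -⟩ := hyC
    exact ⟨hyO.1, hyO.2, orderOf_dvd_natCard y⟩
  · intro x hx
    exact ⟨x, hXC x hx, rfl⟩
  · intro x hx
    have hcompeq : compSet O x (hXO hx) = C := by
      ext y
      constructor
      · rintro ⟨hy, hr⟩
        exact ⟨hy, (hXreach x hx).trans hr⟩
      · rintro ⟨hy, hr⟩
        exact ⟨hy, (hXreach x hx).symm.trans hr⟩
    rw [hcompeq]
    ext y
    simp only [Set.mem_setOf_eq]
    constructor
    · intro hy
      exact ⟨y, hy, rfl⟩
    · rintro ⟨z, hzC, hzy⟩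
      obtain ⟨hzO, -⟩ := id hzC
      have hp : (orderOf y).Prime := hzy ▸ hzO.1
      have hpodd : Odd (orderOf y) := hzy ▸ hzO.2
      obtain ⟨g, w, hw, hcomm1, hcomm2⟩ := exists_conj_commute hp rfl hzy
      have hz' : g⁻¹ * z * g ∈ C := hCconj z hzC g
      obtain ⟨hz'O, hr'⟩ := hz'
      have hwO : w ∈ O := ⟨hw ▸ hp, hw ▸ hpodd⟩
      have hyO : y ∈ O := ⟨hp, hpodd⟩
      have r1 : (commGraph O).Reachable ⟨g⁻¹ * z * g, hz'O⟩ ⟨w, hwO⟩ :=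
        reach_of_commute hz'O hwO hcomm1
      have r2 : (commGraph O).Reachable ⟨w, hwO⟩ ⟨y, hyO⟩ :=
        reach_of_commute hwO hyO hcomm2
      exact ⟨hyO, (hr'.trans r1).trans r2⟩
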